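/- Let R*R(r,θ) = 96 M³ r χ cos(θ)·(3M⁴χ⁴cos⁴θ − 10M²r²χ²cos²θ + 3r⁴)/(M²χ²cos²θ + r²)⁶ be the Kerr Pontryagin density (M > 0, 0 < χ < 1), and let φ₀(r,θ) = (r−M)cos(θ). Then with r₊ = M(1+√(1−χ²)), the integral (1/4π)∫_{r₊}^∞∫_0^π∫_0^{2π} R*R(r,θ)·φ₀(r,θ)·(M²χ²cos²θ + r²)·sin(θ) dφ dθ dr equals (2/χ³)·(2χ⁴ + (2√(1−χ²) − 3)χ² − 2√(1−χ²) + 2). -/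

import Mathlib

open Set Real MeasureTheory

set_option maxHeartbeats 1000000 in
/-- First-order DCS dipole hair of a Kerr black hole: integrating the Kerr
Pontryagin density against the homogeneous solution `φ₀ = (r − M) cos θ` and
the Boyer–Lindquist volume factor `(M²χ²cos²θ + r²) sin θ` over the exterior
`r ≥ r₊ = M(1 + √(1−χ²))` yields
`(2/χ³)(2χ⁴ + (2√(1−χ²) − 3)χ² − 2√(1−χ²) + 2)`. -/
theorem dcs_dipole_hair_kerr (M χ : ℝ) (hM : 0 < M) (hχ0 : 0 < χ) (hχ1 : χ < 1) :
    (1 / (4 * π)) *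
      (∫ r in Ioi (M * (1 + Real.sqrt (1 - χ ^ 2))),
        ∫ θ in (0 : ℝ)..π, ∫ _φ in (0 : ℝ)..(2 * π),
          (96 * M ^ 3 * r * χ * Real.cos θ *
              (3 * M ^ 4 * χ ^ 4 * Real.cos θ ^ 4
                - 10 * M ^ 2 * r ^ 2 * χ ^ 2 * Real.cos θ ^ 2
                + 3 * r ^ 4) /
            (M ^ 2 * χ ^ 2 * Real.cos θ ^ 2 + r ^ 2) ^ 6) *
            ((r - M) * Real.cos θ) *
            (M ^ 2 * χ ^ 2 * Real.cos θ ^ 2 + r ^ 2) * Real.sin θ)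
      = (2 / χ ^ 3) * (2 * χ ^ 4 + (2 * Real.sqrt (1 - χ ^ 2) - 3) * χ ^ 2
          - 2 * Real.sqrt (1 - χ ^ 2) + 2) := by
  have hπ : (0:ℝ) < π := Real.pi_pos
  have h1χ : (0:ℝ) < 1 - χ ^ 2 := by nlinarith
  set s : ℝ := Real.sqrt (1 - χ ^ 2) with hs
  have hs2 : s ^ 2 = 1 - χ ^ 2 := Real.sq_sqrt h1χ.le
  have hs0 : 0 < s := Real.sqrt_pos.mpr h1χ
  have hs1 : s < 1 := by nlinarith
  set A : ℝ := M ^ 2 * χ ^ 2 with hA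
  have hApos : 0 < A := by rw [hA]; positivity
  have hAM : A < M ^ 2 := by rw [hA]; nlinarith
  set rp : ℝ := M * (1 + s) with hrp
  have hMrp : M < rp := by rw [hrp]; nlinarith
  have hrp0 : 0 < rp := hM.trans hMrp
  -- the value of the inner double integral
  set g : ℝ → ℝ := fun r => 384 * π * M ^ 3 * χ * (r * ((r - M) * (r ^ 2 - A))) / (r ^ 2 + A) ^ 4
    with hg
  have hinner : ∀ r ∈ Ioi rp,
      (∫ θ in (0 : ℝ)..π, ∫ _φ in (0 : ℝ)..(2 * π),
          (96 * M ^ 3 * r * χ * Real.cos θ *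
              (3 * M ^ 4 * χ ^ 4 * Real.cos θ ^ 4
                - 10 * M ^ 2 * r ^ 2 * χ ^ 2 * Real.cos θ ^ 2
                + 3 * r ^ 4) /
            (A * Real.cos θ ^ 2 + r ^ 2) ^ 6) *
            ((r - M) * Real.cos θ) *
            (A * Real.cos θ ^ 2 + r ^ 2) * Real.sin θ) = g r := by
    intro r hr
    have hr0 : 0 < r := hrp0.trans hr
    have hden : ∀ θ : ℝ, (0:ℝ) < A * Real.cos θ ^ 2 + r ^ 2 := by
      intro θ
      have := sq_nonneg (Real.cos θ)
      nlinarith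
    -- kill the φ-integral
    simp only [intervalIntegral.integral_const, smul_eq_mul, sub_zero]
    -- FTC in θ
    set H : ℝ → ℝ := fun θ =>
      -(192 * π * M ^ 3 * r * χ * (r - M) *
        (Real.cos θ ^ 3 * (r ^ 2 - A * Real.cos θ ^ 2) / (A * Real.cos θ ^ 2 + r ^ 2) ^ 4))
      with hH
    have hderiv : ∀ θ ∈ uIcc (0:ℝ) π, HasDerivAt H
        ((2 * π) *
          ((96 * M ^ 3 * r * χ * Real.cos θ *
              (3 * M ^ 4 * χ ^ 4 * Real.cos θ ^ 4
                - 10 * M ^ 2 * r ^ 2 * χ ^ 2 * Real.cos θ ^ 2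
                + 3 * r ^ 4) /
            (A * Real.cos θ ^ 2 + r ^ 2) ^ 6) *
            ((r - M) * Real.cos θ) *
            (A * Real.cos θ ^ 2 + r ^ 2) * Real.sin θ)) θ := by
      intro θ _
      set u : ℝ := Real.cos θ with hu
      have hc : HasDerivAt Real.cos (-Real.sin θ) θ := Real.hasDerivAt_cos θ
      have hdu : (0:ℝ) < A * u ^ 2 + r ^ 2 := hden θ
      have hnum : HasDerivAt (fun v : ℝ => v ^ 3 * (r ^ 2 - A * v ^ 2))
          ((3 * u ^ 2) * (r ^ 2 - A * u ^ 2) + u ^ 3 * (-(A * (2 * u)))) u := by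
        have h1 : HasDerivAt (fun v : ℝ => v ^ 3) (3 * u ^ 2) u := by
          simpa using hasDerivAt_pow 3 u
        have h2 : HasDerivAt (fun v : ℝ => r ^ 2 - A * v ^ 2) (-(A * (2 * u))) u := by
          have h3 : HasDerivAt (fun v : ℝ => v ^ 2) (2 * u) u := by
            simpa using hasDerivAt_pow 2 u
          simpa using ((h3.const_mul A).const_sub (r ^ 2))
        exact h1.mul h2
      have hdena : HasDerivAt (fun v : ℝ => (A * v ^ 2 + r ^ 2) ^ 4)
          (4 * (A * u ^ 2 + r ^ 2) ^ 3 * (A * (2 * u))) u := by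
        have h3 : HasDerivAt (fun v : ℝ => A * v ^ 2 + r ^ 2) (A * (2 * u)) u := by
          have h4 : HasDerivAt (fun v : ℝ => v ^ 2) (2 * u) u := by
            simpa using hasDerivAt_pow 2 u
          simpa using (h4.const_mul A).add_const (r ^ 2)
        have := h3.fun_pow 4
        simpa [mul_comm, mul_assoc, mul_left_comm] using this
      have hquot : HasDerivAt (fun v : ℝ => v ^ 3 * (r ^ 2 - A * v ^ 2) / (A * v ^ 2 + r ^ 2) ^ 4)
          ((((3 * u ^ 2) * (r ^ 2 - A * u ^ 2) + u ^ 3 * (-(A * (2 * u)))) * (A * u ^ 2 + r ^ 2) ^ 4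
            - u ^ 3 * (r ^ 2 - A * u ^ 2) * (4 * (A * u ^ 2 + r ^ 2) ^ 3 * (A * (2 * u))))
            / ((A * u ^ 2 + r ^ 2) ^ 4) ^ 2) u :=
        hnum.div hdena (by positivity)
      have hcomp := hquot.comp θ hc
      have hfinal := hcomp.const_mul (-(192 * π * M ^ 3 * r * χ * (r - M)))
      convert! hfinal using 1
      · ext x; rw [hH]; simp only [Function.comp]; ring
      · have h6 : (A * u ^ 2 + r ^ 2) ≠ 0 := ne_of_gt hdu
        field_simp
        ring
    have hcont : Continuous fun θ : ℝ =>
        (2 * π) *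
          ((96 * M ^ 3 * r * χ * Real.cos θ *
              (3 * M ^ 4 * χ ^ 4 * Real.cos θ ^ 4
                - 10 * M ^ 2 * r ^ 2 * χ ^ 2 * Real.cos θ ^ 2
                + 3 * r ^ 4) /
            (A * Real.cos θ ^ 2 + r ^ 2) ^ 6) *
            ((r - M) * Real.cos θ) *
            (A * Real.cos θ ^ 2 + r ^ 2) * Real.sin θ) := by
      exact continuous_const.mul
        ((((Continuous.div (by fun_prop) (by fun_prop)
            (fun x => pow_ne_zero 6 (hden x).ne')).mul (by fun_prop)).mul
          (by fun_prop)).mul Real.continuous_sin)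
    rw [intervalIntegral.integral_eq_sub_of_hasDerivAt hderiv
      (hcont.intervalIntegrable 0 π)]
    rw [hH, hg]
    simp only [Real.cos_pi, Real.cos_zero]
    have h1 : (A * (-1:ℝ) ^ 2 + r ^ 2) ≠ 0 := by nlinarith [hden 0, Real.cos_zero]
    have h2 : (A * (1:ℝ) ^ 2 + r ^ 2) ≠ 0 := by nlinarith [hden 0, Real.cos_zero]
    have h3 : (r ^ 2 + A) ≠ 0 := by nlinarith
    field_simp
    ring
  -- rewrite the set integral
  have hcongr : (∫ r in Ioi rp,
        ∫ θ in (0 : ℝ)..π, ∫ _φ in (0 : ℝ)..(2 * π),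
          (96 * M ^ 3 * r * χ * Real.cos θ *
              (3 * M ^ 4 * χ ^ 4 * Real.cos θ ^ 4
                - 10 * M ^ 2 * r ^ 2 * χ ^ 2 * Real.cos θ ^ 2
                + 3 * r ^ 4) /
            (A * Real.cos θ ^ 2 + r ^ 2) ^ 6) *
            ((r - M) * Real.cos θ) *
            (A * Real.cos θ ^ 2 + r ^ 2) * Real.sin θ)
      = ∫ r in Ioi rp, g r :=
    setIntegral_congr_fun measurableSet_Ioi hinner
  rw [hcongr]
  -- improper integral via antiderivative
  set F : ℝ → ℝ := fun r =>
    -(32 * π * M ^ 3 * χ * (4 * r ^ 3 - 3 * M * r ^ 2 + M ^ 3 * χ ^ 2) / (r ^ 2 + A) ^ 3)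
    with hF
  have hdenr : ∀ x : ℝ, (0:ℝ) < x ^ 2 + A := by intro x; positivity
  have hFderiv : ∀ x : ℝ, HasDerivAt F (g x) x := by
    intro x
    have h1 : HasDerivAt (fun r : ℝ => 4 * r ^ 3 - 3 * M * r ^ 2 + M ^ 3 * χ ^ 2)
        (4 * (3 * x ^ 2) - 3 * M * (2 * x)) x := by
      have ha : HasDerivAt (fun r : ℝ => r ^ 3) (3 * x ^ 2) x := by
        simpa using hasDerivAt_pow 3 x
      have hb : HasDerivAt (fun r : ℝ => r ^ 2) (2 * x) x := by
        simpa using hasDerivAt_pow 2 x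
      simpa using ((ha.const_mul 4).sub (hb.const_mul (3 * M))).add_const (M ^ 3 * χ ^ 2)
    have h2 : HasDerivAt (fun r : ℝ => (r ^ 2 + A) ^ 3) (3 * (x ^ 2 + A) ^ 2 * (2 * x)) x := by
      have hb : HasDerivAt (fun r : ℝ => r ^ 2 + A) (2 * x) x := by
        simpa using (hasDerivAt_pow 2 x).add_const A
      simpa [mul_comm, mul_assoc, mul_left_comm] using hb.fun_pow 3
    have h3 := (h1.div h2 (by positivity)).const_mul (-(32 * π * M ^ 3 * χ))
    convert! h3 using 1
    · ext y; rw [hF]; simp only [Pi.div_apply]; ring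
    · have hne : (x ^ 2 + A) ≠ 0 := ne_of_gt (hdenr x)
      rw [hg]
      field_simp
      ring
  have hgpos : ∀ x ∈ Ioi rp, 0 ≤ g x := by
    intro x hx
    have hx0 : 0 < x := hrp0.trans hx
    have hxM : 0 < x - M := by simp only [mem_Ioi] at hx; nlinarith
    have hxA : 0 < x ^ 2 - A := by simp only [mem_Ioi] at hx; nlinarith
    rw [hg]
    apply div_nonneg _ (by positivity)
    exact mul_nonneg (by positivity) (mul_pos hx0 (mul_pos hxM hxA)).le
  have hFtend : Filter.Tendsto F Filter.atTop (nhds 0) := by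
    set G : ℝ → ℝ := fun x =>
      -(32 * π * M ^ 3 * χ * (4 * x ^ 3 - 3 * M * x ^ 4 + M ^ 3 * χ ^ 2 * x ^ 6)
        / (1 + A * x ^ 2) ^ 3) with hG
    have hGc : ContinuousAt G 0 := by
      apply ContinuousAt.neg
      apply ContinuousAt.div (by fun_prop) (by fun_prop)
      norm_num
    have hG0 : G 0 = 0 := by rw [hG]; norm_num
    have h := hGc.tendsto.comp tendsto_inv_atTop_zero
    rw [hG0] at h
    apply h.congr'
    filter_upwards [Filter.eventually_gt_atTop 0] with x hx
    have hx0 : x ≠ 0 := ne_of_gt hx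
    have hne : (x ^ 2 + A) ≠ 0 := ne_of_gt (hdenr x)
    have hne2 : (1 + A * x⁻¹ ^ 2) ≠ 0 := by
      have : 0 < 1 + A * x⁻¹ ^ 2 := by positivity
      exact ne_of_gt this
    simp only [Function.comp, hG, hF]
    field_simp
  have hIoi : (∫ r in Ioi rp, g r) = 0 - F rp :=
    integral_Ioi_of_hasDerivAt_of_nonneg ((hFderiv rp).continuousAt.continuousWithinAt)
      (fun x _ => hFderiv x) hgpos hFtend
  rw [hIoi]
  -- final arithmetic
  simp only [hF]
  have hrpA : rp ^ 2 + A = 2 * M ^ 2 * (1 + s) := by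
    rw [hrp, hA]; nlinarith
  rw [hrpA, hrp]
  have h1s : (0:ℝ) < 1 + s := by linarith
  have hne1 : (2 * M ^ 2 * (1 + s)) ^ 3 ≠ 0 := by positivity
  field_simp
  linear_combination (32 * π *
    (4 + 8 * s + 4 * s ^ 2 - 2 * χ ^ 2 - 6 * s * χ ^ 2 - 4 * s ^ 2 * χ ^ 2 + χ ^ 4)) * hs2
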